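/- arXiv:2408.10968 — 2 statements merged into one kernel-verified Lean document; each statement's English description precedes it below -/
import Mathlib

section
/- Let H₊, H₋, K₊, K₋ be complex Hilbert spaces, H = H₊ × H₋ and K = K₊ × K₋ with their standard forms ω and ω'. Let Φ : H → K be a continuous linear bijection satisfying ω'(Φx, Φy) = ω(x,y) for all x, y ∈ H, written in block form Φ(x₁, x₂) = (g₁₁ x₁ + g₁₂ x₂, g₂₁ x₁ + g₂₂ x₂) with continuous linear maps g₁₁ : H₊ → K₊, g₁₂ : H₋ → K₊, g₂₁ : H₊ → K₋, g₂₂ : H₋ → K₋. If B : H₊ → H₋ is a continuous linear map with ‖B‖ < 1, then g₁₁ + g₁₂∘B : H₊ → K₊ is a continuous linear bijection, the operator B' := (g₂₁ + g₂₂∘B)∘(g₁₁ + g₁₂∘B)⁻¹ : K₊ → K₋ satisfies ‖B'‖ < 1, and Φ({(x, B x) : x ∈ H₊}) = {(y, B' y) : y ∈ K₊}. -/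
noncomputable section

open Complex

variable {Hp Hm Kp Km : Type*}
  [NormedAddCommGroup Hp] [InnerProductSpace ℂ Hp] [CompleteSpace Hp]
  [NormedAddCommGroup Hm] [InnerProductSpace ℂ Hm] [CompleteSpace Hm]
  [NormedAddCommGroup Kp] [InnerProductSpace ℂ Kp] [CompleteSpace Kp]
  [NormedAddCommGroup Km] [InnerProductSpace ℂ Km] [CompleteSpace Km]

/-- The standard strong symplectic form `ω((x₁,x₂),(y₁,y₂)) = i⟨x₁,y₁⟩ − i⟨x₂,y₂⟩` on
a product `G₊ × G₋` of Hilbert spaces, linear in the first argument and conjugate-linear in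
the second.  (Since Mathlib's `inner` is conjugate-linear in its *first* argument, the paper's
`⟨a,b⟩` is `inner b a`.) -/
def stdForm {Gp Gm : Type*} [NormedAddCommGroup Gp] [InnerProductSpace ℂ Gp]
    [NormedAddCommGroup Gm] [InnerProductSpace ℂ Gm] (x y : Gp × Gm) : ℂ :=
  Complex.I * (inner ℂ y.1 x.1 : ℂ) - Complex.I * (inner ℂ y.2 x.2 : ℂ)

set_option maxHeartbeats 1600000 in
/-- If `Φ : H₊ × H₋ → K₊ × K₋` is a continuous linear bijection preserving the standard
forms, given in block form by `g₁₁, g₁₂, g₂₁, g₂₂`, and `B : H₊ → H₋` has `‖B‖ < 1`, then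
`g₁₁ + g₁₂∘B` is a continuous linear bijection, the operator
`B' = (g₂₁ + g₂₂∘B)∘(g₁₁ + g₁₂∘B)⁻¹` satisfies `‖B'‖ < 1`, and `Φ` maps the graph of `B`
onto the graph of `B'`. -/
theorem statement2
    (Φ : (Hp × Hm) →L[ℂ] (Kp × Km)) (hΦbij : Function.Bijective Φ)
    (hΦsymp : ∀ x y : Hp × Hm, stdForm (Φ x) (Φ y) = stdForm x y)
    (g11 : Hp →L[ℂ] Kp) (g12 : Hm →L[ℂ] Kp) (g21 : Hp →L[ℂ] Km) (g22 : Hm →L[ℂ] Km)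
    (hblock : ∀ x : Hp × Hm, Φ x = (g11 x.1 + g12 x.2, g21 x.1 + g22 x.2))
    (B : Hp →L[ℂ] Hm) (hB : ‖B‖ < 1) :
    Function.Bijective (g11 + g12.comp B) ∧
      ∃ B' : Kp →L[ℂ] Km,
        B'.comp (g11 + g12.comp B) = g21 + g22.comp B ∧ ‖B'‖ < 1 ∧
          Φ '' (Set.range fun x : Hp => (x, B x)) = Set.range fun y : Kp => (y, B' y) := by
  set T : Hp →L[ℂ] Kp := g11 + g12.comp B with hTdef
  set S : Hp →L[ℂ] Km := g21 + g22.comp B with hSdef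
  have hblk : ∀ x : Hp, Φ (x, B x) = (T x, S x) := by
    intro x
    rw [hblock]
    simp [hTdef, hSdef]
  -- the form-preservation in real terms
  have qeq : ∀ u : Hp × Hm, ‖(Φ u).1‖ ^ 2 - ‖(Φ u).2‖ ^ 2 = ‖u.1‖ ^ 2 - ‖u.2‖ ^ 2 := by
    intro u
    have h := hΦsymp u u
    simp only [stdForm, inner_self_eq_norm_sq_to_K] at h
    have h1 : Complex.I * ((‖(Φ u).1‖:ℂ) ^ 2 - (‖(Φ u).2‖:ℂ) ^ 2)
        = Complex.I * ((‖u.1‖:ℂ) ^ 2 - (‖u.2‖:ℂ) ^ 2) := by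
      rw [mul_sub, mul_sub]; exact h
    have h2 : ((‖(Φ u).1‖ ^ 2 - ‖(Φ u).2‖ ^ 2 : ℝ) : ℂ) = ((‖u.1‖ ^ 2 - ‖u.2‖ ^ 2 : ℝ) : ℂ) := by
      push_cast
      exact mul_left_cancel₀ Complex.I_ne_zero h1
    exact_mod_cast h2
  have key : ∀ x : Hp, ‖T x‖ ^ 2 - ‖S x‖ ^ 2 = ‖x‖ ^ 2 - ‖B x‖ ^ 2 := by
    intro x
    have := qeq (x, B x)
    rwa [hblk] at this
  have hBnn : (0:ℝ) ≤ ‖B‖ := norm_nonneg _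
  have hBx : ∀ x : Hp, ‖B x‖ ≤ ‖B‖ * ‖x‖ := fun x => B.le_opNorm x
  set ε : ℝ := 1 - ‖B‖ ^ 2 with hεdef
  have hε : 0 < ε := by nlinarith
  have keyge : ∀ x : Hp, ε * ‖x‖ ^ 2 ≤ ‖T x‖ ^ 2 - ‖S x‖ ^ 2 := by
    intro x
    rw [key]
    have := hBx x
    nlinarith [norm_nonneg (B x), norm_nonneg x]
  have hlow : ∀ x : Hp, ε * ‖x‖ ^ 2 ≤ ‖T x‖ ^ 2 := by
    intro x
    have := keyge x
    nlinarith [norm_nonneg (S x)]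
  -- injectivity of T
  have hTinj : Function.Injective T := by
    intro a b hab
    have h0 : T (a - b) = 0 := by rw [map_sub, hab, sub_self]
    have := hlow (a - b)
    rw [h0] at this
    simp only [norm_zero] at this
    have : ‖a - b‖ ^ 2 ≤ 0 := by nlinarith
    have : ‖a - b‖ = 0 := by nlinarith [norm_nonneg (a - b), sq_nonneg ‖a - b‖]
    rwa [norm_eq_zero, sub_eq_zero] at this
  -- antilipschitz
  have hsε : 0 < Real.sqrt ε := Real.sqrt_pos.mpr hε
  have hanti : AntilipschitzWith (Real.toNNReal ((Real.sqrt ε)⁻¹)) T := by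
    apply T.antilipschitz_of_bound
    intro x
    rw [Real.coe_toNNReal _ (by positivity)]
    have h1 : Real.sqrt ε * ‖x‖ ≤ ‖T x‖ := by
      have : Real.sqrt (ε * ‖x‖ ^ 2) ≤ Real.sqrt (‖T x‖ ^ 2) := Real.sqrt_le_sqrt (hlow x)
      rwa [Real.sqrt_mul hε.le, Real.sqrt_sq (norm_nonneg x), Real.sqrt_sq (norm_nonneg (T x))] at this
    calc ‖x‖ = (Real.sqrt ε)⁻¹ * (Real.sqrt ε * ‖x‖) := by field_simp
      _ ≤ (Real.sqrt ε)⁻¹ * ‖T x‖ := by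
          apply mul_le_mul_of_nonneg_left h1 (by positivity)
  have hclosed : IsClosed (Set.range T) := hanti.isClosed_range T.uniformContinuous
  -- surjectivity of T
  have hTsurj : Function.Surjective T := by
    by_contra hns
    have hrange : LinearMap.range (T : Hp →ₗ[ℂ] Kp) ≠ ⊤ := by
      intro h
      exact hns (LinearMap.range_eq_top.mp h)
    haveI hcomp : CompleteSpace (LinearMap.range (T : Hp →ₗ[ℂ] Kp)) := by
      have h : IsClosed (LinearMap.range (T : Hp →ₗ[ℂ] Kp) : Set Kp) := by
        convert hclosed using 1
        exact LinearMap.coe_range _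
      exact h.completeSpace_coe
    have hbot : (LinearMap.range (T : Hp →ₗ[ℂ] Kp))ᗮ ≠ ⊥ :=
      fun h => hrange (Submodule.orthogonal_eq_bot_iff.mp h)
    obtain ⟨y, hy, hy0⟩ := Submodule.exists_mem_ne_zero_of_ne_bot hbot
    -- y ⟂ range T, y ≠ 0
    obtain ⟨u, hu⟩ := hΦbij.2 (y, 0)
    set x : Hp := u.1 with hx
    set z : Hp × Hm := u - (u.1, B u.1) with hz
    have hz1 : z.1 = 0 := by simp [hz]
    have hΦz : Φ z = (y - T x, -(S x)) := by
      rw [hz, map_sub, hu, hblk]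
      simp [Prod.ext_iff, sub_eq_add_neg]
      exact ⟨rfl, rfl⟩
    have hq : ‖y - T x‖ ^ 2 - ‖S x‖ ^ 2 = ‖z.1‖ ^ 2 - ‖z.2‖ ^ 2 := by
      have h := qeq z
      rw [hΦz] at h
      simpa using h
    have horth : (inner ℂ (T x) y : ℂ) = 0 := hy (T x) (LinearMap.mem_range_self (T : Hp →ₗ[ℂ] Kp) x)
    have horth2 : (inner ℂ y (T x) : ℂ) = 0 := inner_eq_zero_symm.mp horth
    have h0 : (inner ℂ y (-(T x)) : ℂ) = 0 := by rw [inner_neg_right, horth2, neg_zero]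
    have hyTx : ‖y - T x‖ ^ 2 = ‖y‖ ^ 2 + ‖T x‖ ^ 2 := by
      calc ‖y - T x‖ ^ 2 = ‖y + -(T x)‖ ^ 2 := by rw [sub_eq_add_neg]
        _ = ‖y‖ ^ 2 + ‖-(T x)‖ ^ 2 := by
            rw [pow_two, pow_two, pow_two]
            exact norm_add_sq_eq_norm_sq_add_norm_sq_of_inner_eq_zero _ _ h0
        _ = ‖y‖ ^ 2 + ‖T x‖ ^ 2 := by rw [norm_neg]
    rw [hyTx, hz1] at hq
    simp only [norm_zero] at hq
    -- hq : ‖y‖^2 + ‖T x‖^2 - ‖S x‖^2 = 0 - ‖z.2‖^2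
    have hk := keyge x
    have hy2 : ‖y‖ ^ 2 ≤ 0 := by nlinarith [norm_nonneg z.2, norm_nonneg x, sq_nonneg ‖z.2‖]
    have : ‖y‖ = 0 := by nlinarith [norm_nonneg y, sq_nonneg ‖y‖]
    exact hy0 (norm_eq_zero.mp this)
  have hTbij : Function.Bijective T := ⟨hTinj, hTsurj⟩
  refine ⟨hTbij, ?_⟩
  -- the inverse
  have hker : LinearMap.ker (T : Hp →ₗ[ℂ] Kp) = ⊥ := LinearMap.ker_eq_bot.mpr hTinj
  have hrg : LinearMap.range (T : Hp →ₗ[ℂ] Kp) = ⊤ := LinearMap.range_eq_top.mpr hTsurj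
  set E : Kp ≃L[ℂ] Hp := (ContinuousLinearEquiv.ofBijective T hker hrg).symm with hEdef
  set e : Kp →L[ℂ] Hp := (E : Kp →L[ℂ] Hp) with hedef
  have hecoe : ∀ y : Kp, e y = E y := fun y => rfl
  have hE : ∀ x : Hp, E (T x) = x := by
    intro x
    have h1 : ContinuousLinearEquiv.ofBijective T hker hrg x = T x :=
      congrFun (ContinuousLinearEquiv.coeFn_ofBijective T hker hrg) x
    rw [hEdef, ← h1]
    exact (ContinuousLinearEquiv.ofBijective T hker hrg).symm_apply_apply x
  have heT : ∀ x : Hp, e (T x) = x := fun x => by rw [hecoe, hE]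
  have hTe : ∀ y : Kp, T (e y) = y := by
    intro y
    have := heT (e y)
    rw [hecoe (T (e y))] at this
    -- use injectivity-free route: E is inverse
    have h2 : T (e y) = T (e y) := rfl
    -- direct: apply_symm_apply
    rw [hecoe]
    have h1 : ∀ w, ContinuousLinearEquiv.ofBijective T hker hrg w = T w :=
      fun w => congrFun (ContinuousLinearEquiv.coeFn_ofBijective T hker hrg) w
    rw [hEdef, ← h1]
    exact (ContinuousLinearEquiv.ofBijective T hker hrg).apply_symm_apply y
  clear_value e E
  refine ⟨S.comp e, ?_, ?_, ?_⟩
  · ext x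
    simp [ContinuousLinearMap.comp_apply, heT x]
  · -- norm bound
    set C : ℝ := max ‖Φ‖ 1 with hCdef
    have hC1 : (1:ℝ) ≤ C := le_max_right _ _
    have hC0 : (0:ℝ) < C := lt_of_lt_of_le one_pos hC1
    have hbound : ∀ y : Kp, ‖T (e y)‖ ≤ C * ‖e y‖ := by
      intro y
      have h1 : ‖Φ (e y, B (e y))‖ ≤ ‖Φ‖ * ‖(e y, B (e y))‖ := Φ.le_opNorm _
      have h2 : ‖(e y, B (e y))‖ = max ‖e y‖ ‖B (e y)‖ := rfl
      have h3 : ‖B (e y)‖ ≤ ‖e y‖ := by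
        calc ‖B (e y)‖ ≤ ‖B‖ * ‖e y‖ := hBx _
          _ ≤ 1 * ‖e y‖ := mul_le_mul_of_nonneg_right hB.le (norm_nonneg _)
          _ = ‖e y‖ := one_mul _
      have h4 : ‖(e y, B (e y))‖ ≤ ‖e y‖ := by rw [h2]; exact max_le le_rfl h3
      have h5 : ‖T (e y)‖ ≤ ‖Φ (e y, B (e y))‖ := by
        rw [hblk]
        exact norm_fst_le ((T (e y), S (e y)) : Kp × Km)
      calc ‖T (e y)‖ ≤ ‖Φ‖ * ‖(e y, B (e y))‖ := le_trans h5 h1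
        _ ≤ C * ‖e y‖ := by
            apply mul_le_mul (le_max_left _ _) h4 (norm_nonneg _) hC0.le
    set k : ℝ := Real.sqrt (1 - ε / C ^ 2) with hkdef
    have hεC : ε / C ^ 2 ≤ 1 := by
      rw [div_le_one (by positivity)]
      nlinarith
    have hεC0 : 0 < ε / C ^ 2 := by positivity
    have hk1 : k < 1 := by
      rw [hkdef, Real.sqrt_lt' one_pos]
      nlinarith
    have hknn : 0 ≤ k := Real.sqrt_nonneg _
    have hle : ∀ y : Kp, ‖S (e y)‖ ≤ k * ‖y‖ := by
      intro y
      have hk2 : ε * ‖e y‖ ^ 2 ≤ ‖T (e y)‖ ^ 2 - ‖S (e y)‖ ^ 2 := keyge (e y)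
      rw [hTe y] at hk2
      have hb := hbound y
      rw [hTe y] at hb
      -- ‖y‖ ≤ C * ‖e y‖, so ‖e y‖^2 ≥ ‖y‖^2 / C^2
      have hb2 : ‖y‖ ^ 2 / C ^ 2 ≤ ‖e y‖ ^ 2 := by
        rw [div_le_iff₀ (by positivity)]
        nlinarith [norm_nonneg (e y), norm_nonneg y]
      have hS2 : ‖S (e y)‖ ^ 2 ≤ (1 - ε / C ^ 2) * ‖y‖ ^ 2 := by
        have : ε * (‖y‖ ^ 2 / C ^ 2) ≤ ε * ‖e y‖ ^ 2 :=
          mul_le_mul_of_nonneg_left hb2 hε.le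
        have hfield : ε * (‖y‖ ^ 2 / C ^ 2) = ε / C ^ 2 * ‖y‖ ^ 2 := by ring
        nlinarith
      calc ‖S (e y)‖ = Real.sqrt (‖S (e y)‖ ^ 2) := (Real.sqrt_sq (norm_nonneg _)).symm
        _ ≤ Real.sqrt ((1 - ε / C ^ 2) * ‖y‖ ^ 2) := Real.sqrt_le_sqrt hS2
        _ = k * ‖y‖ := by
            rw [Real.sqrt_mul (by linarith), Real.sqrt_sq (norm_nonneg y)]
    have : ‖S.comp (e : Kp →L[ℂ] Hp)‖ ≤ k := by
      apply ContinuousLinearMap.opNorm_le_bound _ hknn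
      intro y
      simpa using hle y
    linarith
  · -- graph image
    ext w
    constructor
    · rintro ⟨z, ⟨x, rfl⟩, rfl⟩
      exact ⟨T x, by rw [hblk]; simp [heT x]⟩
    · rintro ⟨y, rfl⟩
      refine ⟨(e y, B (e y)), ⟨e y, rfl⟩, ?_⟩
      rw [hblk]
      simp [hTe y]


end
end

section
/- Let H be a complex Hilbert space and A : H → H a bounded linear operator that is skew-adjoint (A* = −A) and invertible (bijective with bounded inverse). Let |A| denote the positive square root of A*A, let 𝒥 := |A|⁻¹ ∘ A, and set M₊ := ker(𝒥 − i·Id) and M₋ := ker(𝒥 + i·Id). Then: H is the orthogonal direct sum of M₊ and M₋ (M₋ = M₊^⊥ and M₊ + M₋ = H); M₊ is a maximal completely positive-definite subspace and M₋ is a maximal completely negative-definite subspace of H with respect to the form [x,y] := ⟨Ax, y⟩; and M₋ = {y ∈ H : [x,y] = 0 for all x ∈ M₊}. -/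
set_option maxHeartbeats 2000000
set_option synthInstance.maxHeartbeats 1000000


noncomputable section

open Complex

variable {H : Type*} [NormedAddCommGroup H] [InnerProductSpace ℂ H] [CompleteSpace H]

/-- The form `[x,y] = ⟨Ax, y⟩` (paper convention: linear in the first argument,
conjugate-linear in the second; since Mathlib's `inner` is conjugate-linear in its *first*
argument, the paper's `⟨a,b⟩` is `inner b a`). -/
def formA (A : H →L[ℂ] H) (x y : H) : ℂ := (inner ℂ y (A x) : ℂ)

/-- `M` is completely positive-definite w.r.t. `[·,·]`: it is closed and there is `c > 0`
with `−i[x,x] ≥ c‖x‖²` for all `x ∈ M`. -/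
def IsCPD (A : H →L[ℂ] H) (M : Submodule ℂ H) : Prop :=
  IsClosed (M : Set H) ∧
    ∃ c : ℝ, 0 < c ∧ ∀ x ∈ M, c * ‖x‖ ^ 2 ≤ (-Complex.I * formA A x x).re

/-- `M` is maximal completely positive-definite w.r.t. `[·,·]`. -/
def IsMaxCPD (A : H →L[ℂ] H) (M : Submodule ℂ H) : Prop :=
  IsCPD A M ∧ ∀ N : Submodule ℂ H, IsCPD A N → M ≤ N → N = M

/-- `M` is completely negative-definite w.r.t. `[·,·]`. -/
def IsCND (A : H →L[ℂ] H) (M : Submodule ℂ H) : Prop :=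
  IsClosed (M : Set H) ∧
    ∃ c : ℝ, 0 < c ∧ ∀ x ∈ M, c * ‖x‖ ^ 2 ≤ (Complex.I * formA A x x).re

/-- `M` is maximal completely negative-definite w.r.t. `[·,·]`. -/
def IsMaxCND (A : H →L[ℂ] H) (M : Submodule ℂ H) : Prop :=
  IsCND A M ∧ ∀ N : Submodule ℂ H, IsCND A N → M ≤ N → N = M

local notation "⟪" x ", " y "⟫" => @inner ℂ _ _ x y

/-- Let `A` be bounded, skew-adjoint and invertible, `S = |A|` the positive square root of
`A*A`, `J = |A|⁻¹ ∘ A` (i.e. `S ∘ J = A`), and `M₊ = ker(J − i)`, `M₋ = ker(J + i)`.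
Then `H = M₊ ⊕⊥ M₋`, `M₊` is maximal completely positive-definite, `M₋` is maximal
completely negative-definite for `[x,y] = ⟨Ax,y⟩`, and `M₋` is the symplectic
complement of `M₊`. -/
theorem statement4 (A S J : H →L[ℂ] H)
    (hskew : ContinuousLinearMap.adjoint A = -A)
    (hAbij : Function.Bijective A)
    (hSsa : IsSelfAdjoint S)
    (hSpos : ∀ x : H, 0 ≤ (inner ℂ (S x) x : ℂ).re)
    (hSsq : S * S = ContinuousLinearMap.adjoint A * A)
    (hJ : S * J = A) :
    (LinearMap.ker ((J + Complex.I • (1 : H →L[ℂ] H)) : H →ₗ[ℂ] H) =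
        (LinearMap.ker ((J - Complex.I • (1 : H →L[ℂ] H)) : H →ₗ[ℂ] H))ᗮ) ∧
      (LinearMap.ker ((J - Complex.I • (1 : H →L[ℂ] H)) : H →ₗ[ℂ] H) ⊔
          LinearMap.ker ((J + Complex.I • (1 : H →L[ℂ] H)) : H →ₗ[ℂ] H) = ⊤) ∧
      IsMaxCPD A (LinearMap.ker ((J - Complex.I • (1 : H →L[ℂ] H)) : H →ₗ[ℂ] H)) ∧
      IsMaxCND A (LinearMap.ker ((J + Complex.I • (1 : H →L[ℂ] H)) : H →ₗ[ℂ] H)) ∧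
      ((LinearMap.ker ((J + Complex.I • (1 : H →L[ℂ] H)) : H →ₗ[ℂ] H) : Set H) =
        {y : H | ∀ x ∈ LinearMap.ker ((J - Complex.I • (1 : H →L[ℂ] H)) : H →ₗ[ℂ] H), formA A x y = 0}) := by
  classical
  have hresymm : ∀ a b : H, (⟪a, b⟫).re = (⟪b, a⟫).re := by
    intro a b
    rw [← inner_conj_symm a b]
    exact Complex.conj_re _
  have hstarA : star A = -A := by rw [ContinuousLinearMap.star_eq_adjoint, hskew]
  have hSsq' : S * S = -(A * A) := by rw [hSsq, hskew, neg_mul]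
  have hAA : A * A = -(S * S) := by rw [hSsq', neg_neg]
  -- S is bijective
  have hSbij : Function.Bijective S := by
    have h : Function.Bijective (⇑(S * S)) := by
      rw [hSsq, hskew]
      have : ⇑((-A : H →L[ℂ] H) * A) = (fun y => -y) ∘ ⇑A ∘ ⇑A := by
        ext x; simp [ContinuousLinearMap.mul_apply]
      rw [this]
      exact (neg_involutive.bijective).comp (hAbij.comp hAbij)
    rw [show ⇑(S * S) = ⇑S ∘ ⇑S from rfl] at h
    exact ⟨h.injective.of_comp, h.surjective.of_comp⟩
  set eS := ContinuousLinearEquiv.ofBijective S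
    (LinearMap.ker_eq_bot.mpr hSbij.injective)
    (LinearMap.range_eq_top.mpr hSbij.surjective) with heS
  set S' : H →L[ℂ] H := (eS.symm : H →L[ℂ] H) with hS'def
  have hS'S : S' * S = 1 := by
    ext x
    have := eS.symm_apply_apply x
    simpa [heS, hS'def, ContinuousLinearMap.mul_apply] using this
  have hSS' : S * S' = 1 := by
    ext x
    have := eS.apply_symm_apply x
    simpa [heS, hS'def, ContinuousLinearMap.mul_apply] using this
  have happS' : ∀ x, S (S' x) = x := by
    intro x
    have := congrArg (fun f : H →L[ℂ] H => f x) hSS'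
    simpa [ContinuousLinearMap.mul_apply] using this
  have happS : ∀ x, S' (S x) = x := by
    intro x
    have := congrArg (fun f : H →L[ℂ] H => f x) hS'S
    simpa [ContinuousLinearMap.mul_apply] using this
  -- order facts
  have hS0 : (0 : H →L[ℂ] H) ≤ S := by
    rw [ContinuousLinearMap.nonneg_iff_isPositive, ContinuousLinearMap.isPositive_def']
    exact ⟨hSsa, fun x => by
      simpa [ContinuousLinearMap.reApplyInnerSelf, RCLike.re_to_complex] using hSpos x⟩
  have hstarS' : star S' = S' := by
    have h1 : star S' * S = 1 := by
      conv_lhs => rw [← hSsa.star_eq]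
      rw [← star_mul, hSS', star_one]
    calc star S' = star S' * (S * S') := by rw [hSS', mul_one]
      _ = (star S' * S) * S' := by rw [mul_assoc]
      _ = S' := by rw [h1, one_mul]
  have hS'pos : ∀ x : H, 0 ≤ (⟪S' x, x⟫).re := by
    intro x
    have hx : x = S (S' x) := (happS' x).symm
    nth_rewrite 2 [hx]
    rw [hresymm]
    exact hSpos _
  -- T = -(A * S' * A) is the positive square root of S*S, so S = T
  set T : H →L[ℂ] H := -(A * S' * A) with hTdef
  have hstarT : star T = T := by
    simp only [hTdef, star_neg, star_mul, hstarA, hstarS']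
    noncomm_ring
  have hT0 : (0 : H →L[ℂ] H) ≤ T := by
    rw [ContinuousLinearMap.nonneg_iff_isPositive, ContinuousLinearMap.isPositive_def']
    refine ⟨hstarT, fun x => ?_⟩
    have h1 : T x = ContinuousLinearMap.adjoint A (S' (A x)) := by
      simp [hTdef, hskew, ContinuousLinearMap.mul_apply]
    simp only [ContinuousLinearMap.reApplyInnerSelf, h1]
    rw [ContinuousLinearMap.adjoint_inner_left]
    simpa [RCLike.re_to_complex] using hS'pos (A x)
  have hTsq : T * T = S * S := by
    have h1 : T * T = A * S' * (A * A) * (S' * A) := by rw [hTdef]; noncomm_ring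
    rw [h1, hAA]
    calc A * S' * -(S * S) * (S' * A)
        = -((A * (S' * S)) * ((S * S') * A)) := by noncomm_ring
      _ = -(A * A) := by rw [hS'S, hSS', mul_one, one_mul]
      _ = S * S := by rw [hAA, neg_neg]
  have hST : S = T := by
    have h1 : CFC.sqrt (S * S) = S := CFC.sqrt_unique rfl hS0
    have h2 : CFC.sqrt (S * S) = T := CFC.sqrt_unique hTsq hT0
    exact h1.symm.trans h2
  have hAS : A * S = S * A := by
    calc A * S = A * T := by rw [← hST]
      _ = -((A * A) * (S' * A)) := by rw [hTdef]; noncomm_ring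
      _ = -(-(S * S) * (S' * A)) := by rw [hAA]
      _ = S * ((S * S') * A) := by noncomm_ring
      _ = S * A := by rw [hSS', one_mul]
  have hAS' : A * S' = S' * A := by
    calc A * S' = (S' * S) * (A * S') := by rw [hS'S, one_mul]
      _ = S' * ((S * A) * S') := by noncomm_ring
      _ = S' * ((A * S) * S') := by rw [hAS]
      _ = (S' * A) * (S * S') := by noncomm_ring
      _ = S' * A := by rw [hSS', mul_one]
  have hJeq : J = S' * A := by
    calc J = (S' * S) * J := by rw [hS'S, one_mul]
      _ = S' * (S * J) := by rw [mul_assoc]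
      _ = S' * A := by rw [hJ]
  have hJJ : J * J = -1 := by
    calc J * J = S' * (A * S') * A := by rw [hJeq]; noncomm_ring
      _ = S' * (S' * A) * A := by rw [hAS']
      _ = (S' * S') * (A * A) := by noncomm_ring
      _ = (S' * S') * -(S * S) := by rw [hAA]
      _ = -(S' * ((S' * S) * S)) := by noncomm_ring
      _ = -1 := by rw [hS'S, one_mul, hS'S]
  have hstarJ : star J = -J := by
    rw [hJeq, star_mul, hstarA, hstarS']
    calc -A * S' = -(A * S') := by noncomm_ring
      _ = -(S' * A) := by rw [hAS']
  have hJS : J * S = S * J := by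
    calc J * S = S' * (A * S) := by rw [hJeq, mul_assoc]
      _ = S' * (S * A) := by rw [hAS]
      _ = (S' * S) * A := by rw [mul_assoc]
      _ = A := by rw [hS'S, one_mul]
      _ = S * J := hJ.symm
  have hJS' : J * S' = S' * J := by
    calc J * S' = (S' * S) * (J * S') := by rw [hS'S, one_mul]
      _ = S' * ((S * J) * S') := by noncomm_ring
      _ = S' * ((J * S) * S') := by rw [hJS]
      _ = (S' * J) * (S * S') := by noncomm_ring
      _ = S' * J := by rw [hSS', mul_one]
  -- the two kernels
  set Mp := LinearMap.ker ((J - Complex.I • (1 : H →L[ℂ] H)) : H →ₗ[ℂ] H) with hMp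
  set Mm := LinearMap.ker ((J + Complex.I • (1 : H →L[ℂ] H)) : H →ₗ[ℂ] H) with hMm
  have memP : ∀ x : H, x ∈ Mp ↔ J x = Complex.I • x := by
    intro x
    rw [hMp, LinearMap.mem_ker]
    simp [ContinuousLinearMap.sub_apply, ContinuousLinearMap.smul_apply,
      ContinuousLinearMap.one_apply, sub_eq_zero]
  have memM : ∀ x : H, x ∈ Mm ↔ J x = -(Complex.I • x) := by
    intro x
    rw [hMm, LinearMap.mem_ker]
    simp [ContinuousLinearMap.add_apply, ContinuousLinearMap.smul_apply,
      ContinuousLinearMap.one_apply, add_eq_zero_iff_eq_neg]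
  have hApp : ∀ x : H, A x = S (J x) := by
    intro x
    rw [← hJ]; rfl
  have hAxP : ∀ x ∈ Mp, A x = Complex.I • S x := by
    intro x hx
    rw [hApp x, (memP x).1 hx, map_smul]
  have hAxM : ∀ x ∈ Mm, A x = -(Complex.I • S x) := by
    intro x hx
    rw [hApp x, (memM x).1 hx, map_neg, map_smul]
  have hSxP : ∀ x ∈ Mp, S x ∈ Mp := by
    intro x hx
    rw [memP]
    have h1 : J (S x) = S (J x) := by
      rw [← ContinuousLinearMap.mul_apply, ← ContinuousLinearMap.mul_apply, hJS]
    rw [h1, (memP x).1 hx, map_smul]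
  have hS'xP : ∀ x ∈ Mp, S' x ∈ Mp := by
    intro x hx
    rw [memP]
    have h1 : J (S' x) = S' (J x) := by
      rw [← ContinuousLinearMap.mul_apply, ← ContinuousLinearMap.mul_apply, hJS']
    rw [h1, (memP x).1 hx, map_smul]
  -- decomposition
  have hdec : ∀ x : H, ∃ u ∈ Mp, ∃ v ∈ Mm, x = u + v := by
    intro x
    have hJJx : J (J x) = -x := by
      have := congrArg (fun f : H →L[ℂ] H => f x) hJJ
      simpa [ContinuousLinearMap.mul_apply] using this
    refine ⟨(2:ℂ)⁻¹ • (x - Complex.I • J x), ?_, (2:ℂ)⁻¹ • (x + Complex.I • J x), ?_, ?_⟩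
    · rw [memP, map_smul, map_sub, map_smul, hJJx]
      match_scalars <;> norm_num [Complex.ext_iff]
    · rw [memM, map_smul, map_add, map_smul, hJJx]
      match_scalars <;> norm_num [Complex.ext_iff]
    · match_scalars <;> norm_num [Complex.ext_iff]
  -- orthogonality
  have horth : ∀ x ∈ Mp, ∀ y ∈ Mm, ⟪x, y⟫ = 0 := by
    intro x hx y hy
    have h1 : ⟪J x, y⟫ = -(Complex.I * ⟪x, y⟫) := by
      rw [(memP x).1 hx, inner_smul_left, Complex.conj_I, neg_mul]
    have h2 : ⟪J x, y⟫ = Complex.I * ⟪x, y⟫ := by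
      have hadj : ContinuousLinearMap.adjoint J = -J := by
        rw [← ContinuousLinearMap.star_eq_adjoint, hstarJ]
      rw [← ContinuousLinearMap.adjoint_inner_right J x y, hadj]
      have h3 : (-J : H →L[ℂ] H) y = Complex.I • y := by
        rw [ContinuousLinearMap.neg_apply, (memM y).1 hy, neg_neg]
      rw [h3, inner_smul_right]
    have h3 : (2 * Complex.I) * ⟪x, y⟫ = 0 := by linear_combination h1 - h2
    rcases mul_eq_zero.1 h3 with h | h
    · exact absurd h (by simp [Complex.ext_iff])
    · exact h
  have hMmO : Mm ≤ Mpᗮ := by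
    intro y hy
    exact (Submodule.mem_orthogonal Mp y).mpr fun x hx => horth x hx y hy
  have hOMm : Mpᗮ ≤ Mm := by
    intro z hz
    obtain ⟨u, hu, v, hv, hzuv⟩ := hdec z
    have hvO : v ∈ Mpᗮ := hMmO hv
    have huO : u ∈ Mpᗮ := by
      have h : u = z - v := by rw [hzuv]; abel
      rw [h]; exact Submodule.sub_mem _ hz hvO
    have hu0 : u = 0 := by
      have h := (Submodule.mem_orthogonal _ u).1 huO u hu
      exact inner_self_eq_zero.1 h
    rw [hzuv, hu0, zero_add]; exact hv
  have hfirst : Mm = Mpᗮ := le_antisymm hMmO hOMm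
  have hsecond : Mp ⊔ Mm = ⊤ := by
    rw [eq_top_iff]
    intro x _
    obtain ⟨u, hu, v, hv, hx⟩ := hdec x
    rw [hx]; exact Submodule.add_mem_sup hu hv
  -- coercivity constant
  set R := CFC.sqrt S with hRdef
  have hR0 : (0 : H →L[ℂ] H) ≤ R := CFC.sqrt_nonneg _
  have hRsa : IsSelfAdjoint R := hR0.isSelfAdjoint
  have hRR : R * R = S := CFC.sqrt_mul_sqrt_self S hS0
  have hRbij : Function.Bijective R := by
    have h : Function.Bijective (⇑(R * R)) := by rw [hRR]; exact hSbij
    rw [show ⇑(R * R) = ⇑R ∘ ⇑R from rfl] at h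
    exact ⟨h.injective.of_comp, h.surjective.of_comp⟩
  set eR := ContinuousLinearEquiv.ofBijective R
    (LinearMap.ker_eq_bot.mpr hRbij.injective)
    (LinearMap.range_eq_top.mpr hRbij.surjective) with heR
  set R' : H →L[ℂ] H := (eR.symm : H →L[ℂ] H) with hR'def
  have hcpos : (0:ℝ) < ‖R'‖ ^ 2 + 1 := by positivity
  set c : ℝ := (‖R'‖ ^ 2 + 1)⁻¹ with hcdef
  have hc : 0 < c := by rw [hcdef]; positivity
  have hkey : ∀ x : H, c * ‖x‖ ^ 2 ≤ (⟪S x, x⟫).re := by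
    intro x
    have h1 : (⟪S x, x⟫).re = ‖R x‖ ^ 2 := by
      have hs : S x = R (R x) := by rw [← hRR]; rfl
      rw [hs]
      have h2 : ⟪R (R x), x⟫ = ⟪R x, R x⟫ := by
        calc ⟪R (R x), x⟫ = ⟪(ContinuousLinearMap.adjoint R) (R x), x⟫ := by
              rw [hRsa.adjoint_eq]
          _ = ⟪R x, R x⟫ := ContinuousLinearMap.adjoint_inner_left R x (R x)
      rw [h2, inner_self_eq_norm_sq_to_K]
      norm_cast
    have h4 : R' (R x) = x := by
      have := eR.symm_apply_apply x
      simpa [heR, hR'def] using this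
    have h3 : ‖x‖ ≤ ‖R'‖ * ‖R x‖ := by
      calc ‖x‖ = ‖R' (R x)‖ := by rw [h4]
        _ ≤ ‖R'‖ * ‖R x‖ := R'.le_opNorm _
    have h5 : ‖x‖ ^ 2 ≤ ‖R'‖ ^ 2 * ‖R x‖ ^ 2 := by
      nlinarith [norm_nonneg (R x), norm_nonneg x, norm_nonneg R']
    rw [h1]
    have h6 : c * (‖R'‖ ^ 2 + 1) = 1 := inv_mul_cancel₀ hcpos.ne'
    nlinarith [mul_le_mul_of_nonneg_left h5 hc.le, sq_nonneg ‖R x‖, hc.le]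
  have hzero : ∀ c' : ℝ, 0 < c' → ∀ v : H, c' * ‖v‖ ^ 2 ≤ -((⟪S v, v⟫).re) → v = 0 := by
    intro c' hc' v h2
    have h3 := hSpos v
    have h9 : c' * ‖v‖ ^ 2 = 0 :=
      le_antisymm (by linarith) (mul_nonneg hc'.le (sq_nonneg _))
    rcases mul_eq_zero.1 h9 with h | h
    · exact absurd h hc'.ne'
    · exact norm_eq_zero.1 ((pow_eq_zero_iff two_ne_zero).1 h)
  -- CPD for Mp
  have hCPD : IsCPD A Mp := by
    refine ⟨ContinuousLinearMap.isClosed_ker (J - Complex.I • (1 : H →L[ℂ] H)), c, hc, ?_⟩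
    intro x hx
    have hform : formA A x x = Complex.I * ⟪x, S x⟫ := by
      show ⟪x, A x⟫ = _
      rw [hAxP x hx, inner_smul_right]
    rw [hform]
    have he : -Complex.I * (Complex.I * ⟪x, S x⟫) = ⟪x, S x⟫ := by
      linear_combination (-(⟪x, S x⟫)) * Complex.I_mul_I
    rw [he, hresymm x (S x)]
    exact hkey x
  -- CND for Mm
  have hCND : IsCND A Mm := by
    refine ⟨ContinuousLinearMap.isClosed_ker (J + Complex.I • (1 : H →L[ℂ] H)), c, hc, ?_⟩
    intro x hx
    have hform : formA A x x = -(Complex.I * ⟪x, S x⟫) := by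
      show ⟪x, A x⟫ = _
      rw [hAxM x hx, inner_neg_right, inner_smul_right]
    rw [hform]
    have he : Complex.I * -(Complex.I * ⟪x, S x⟫) = ⟪x, S x⟫ := by
      linear_combination (-(⟪x, S x⟫)) * Complex.I_mul_I
    rw [he, hresymm x (S x)]
    exact hkey x
  -- maximality for Mp
  have hmaxP : ∀ N : Submodule ℂ H, IsCPD A N → Mp ≤ N → N = Mp := by
    intro N hN hle
    rcases hN with ⟨-, c', hc', hbound⟩
    refine le_antisymm ?_ hle
    intro z hz
    obtain ⟨u, hu, v, hv, hzuv⟩ := hdec z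
    have hvN : v ∈ N := by
      have h : v = z - u := by rw [hzuv]; abel
      rw [h]; exact N.sub_mem hz (hle hu)
    have hform : (-Complex.I * formA A v v).re = -((⟪S v, v⟫).re) := by
      have hf1 : formA A v v = -(Complex.I * ⟪v, S v⟫) := by
        show ⟪v, A v⟫ = _
        rw [hAxM v hv, inner_neg_right, inner_smul_right]
      rw [hf1]
      have he : -Complex.I * -(Complex.I * ⟪v, S v⟫) = -(⟪v, S v⟫) := by
        linear_combination (⟪v, S v⟫) * Complex.I_mul_I
      rw [he, Complex.neg_re, hresymm v (S v)]
    have h2 := hbound v hvN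
    rw [hform] at h2
    have hv0 : v = 0 := hzero c' hc' v h2
    rw [hzuv, hv0, add_zero]; exact hu
  -- maximality for Mm
  have hmaxM : ∀ N : Submodule ℂ H, IsCND A N → Mm ≤ N → N = Mm := by
    intro N hN hle
    rcases hN with ⟨-, c', hc', hbound⟩
    refine le_antisymm ?_ hle
    intro z hz
    obtain ⟨u, hu, v, hv, hzuv⟩ := hdec z
    have huN : u ∈ N := by
      have h : u = z - v := by rw [hzuv]; abel
      rw [h]; exact N.sub_mem hz (hle hv)
    have hform : (Complex.I * formA A u u).re = -((⟪S u, u⟫).re) := by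
      have hf1 : formA A u u = Complex.I * ⟪u, S u⟫ := by
        show ⟪u, A u⟫ = _
        rw [hAxP u hu, inner_smul_right]
      rw [hf1]
      have he : Complex.I * (Complex.I * ⟪u, S u⟫) = -(⟪u, S u⟫) := by
        linear_combination (⟪u, S u⟫) * Complex.I_mul_I
      rw [he, Complex.neg_re, hresymm u (S u)]
    have h2 := hbound u huN
    rw [hform] at h2
    have hu0 : u = 0 := hzero c' hc' u h2
    rw [hzuv, hu0, zero_add]; exact hv
  -- final set equality
  have hlast : (Mm : Set H) = {y : H | ∀ x ∈ Mp, formA A x y = 0} := by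
    ext y
    simp only [Set.mem_setOf_eq, SetLike.mem_coe]
    constructor
    · intro hy x hx
      show ⟪y, A x⟫ = 0
      rw [hAxP x hx, inner_smul_right]
      have h0 : ⟪S x, y⟫ = 0 := horth (S x) (hSxP x hx) y hy
      have h1 : ⟪y, S x⟫ = 0 := by rw [← inner_conj_symm, h0, map_zero]
      rw [h1, mul_zero]
    · intro hy
      rw [hfirst, Submodule.mem_orthogonal]
      intro x hx
      have hx' : S' x ∈ Mp := hS'xP x hx
      have h0 := hy (S' x) hx'
      have hSx : A (S' x) = Complex.I • x := by
        rw [hAxP (S' x) hx', happS' x]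
      have hf : formA A (S' x) y = Complex.I * ⟪y, x⟫ := by
        show ⟪y, A (S' x)⟫ = _
        rw [hSx, inner_smul_right]
      rw [hf] at h0
      have hyx : ⟪y, x⟫ = 0 := by
        rcases mul_eq_zero.1 h0 with h | h
        · exact absurd h Complex.I_ne_zero
        · exact h
      rw [← inner_conj_symm, hyx, map_zero]
  exact ⟨hfirst, hsecond, ⟨hCPD, hmaxP⟩, ⟨hCND, hmaxM⟩, hlast⟩


end
end
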